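/- Every complete, separable, compactly injective metric space M is homotopically trivial: for every n ≥ 0, every continuous map f : Sⁿ → M extends to a continuous map Bⁿ⁺¹ → M. -/

import Mathlib

open Metric Set Filter Topology
open scoped ENNReal
set_option maxHeartbeats 1000000
set_option synthInstance.maxHeartbeats 400000

/-- A metric space `M` is compactly injective if every distance-preserving map
from a compact subspace of a compact metric space into `M` extends to a
distance-preserving map of the whole compact space. -/
def CompactlyInjective (M : Type*) [MetricSpace M] : Prop :=
  ∀ (L : Type) (_ : MetricSpace L) (_ : CompactSpace L) (K : Set L), IsCompact K →
    ∀ f : K → M, Isometry f → ∃ g : L → M, Isometry g ∧ ∀ x : K, g x = f x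

theorem stmt11 (M : Type*) [MetricSpace M] [CompleteSpace M]
    [TopologicalSpace.SeparableSpace M] (hM : CompactlyInjective M)
    (n : ℕ)
    (f : (Metric.sphere (0 : EuclideanSpace ℝ (Fin (n + 1))) 1) → M)
    (hf : Continuous f) :
    ∃ g : (Metric.closedBall (0 : EuclideanSpace ℝ (Fin (n + 1))) 1) → M,
      Continuous g ∧
      ∀ x, g (Set.inclusion Metric.sphere_subset_closedBall x) = f x := by
  classical
  obtain ⟨y₀v, hy₀v⟩ : (Metric.sphere (0 : EuclideanSpace ℝ (Fin (n + 1))) 1).Nonempty :=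
    NormedSpace.sphere_nonempty.mpr zero_le_one
  set y₀ : (Metric.sphere (0 : EuclideanSpace ℝ (Fin (n + 1))) 1) := ⟨y₀v, hy₀v⟩ with hy₀
  set κ := kuratowskiEmbedding M with hκdef
  have hκ : Isometry κ := kuratowskiEmbedding.isometry M
  have sphmem : ∀ v : EuclideanSpace ℝ (Fin (n + 1)), v ≠ 0 →
      ‖v‖⁻¹ • v ∈ Metric.sphere (0 : EuclideanSpace ℝ (Fin (n + 1))) 1 := by
    intro v hv
    rw [mem_sphere_zero_iff_norm, norm_smul, norm_inv, norm_norm,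
      inv_mul_cancel₀ (norm_ne_zero_iff.mpr hv)]
  set sph : EuclideanSpace ℝ (Fin (n + 1)) → (Metric.sphere (0 : EuclideanSpace ℝ (Fin (n + 1))) 1) :=
    fun v => if hv : v = 0 then y₀ else ⟨‖v‖⁻¹ • v, sphmem v hv⟩ with hsph
  set h : EuclideanSpace ℝ (Fin (n + 1)) → ↥(lp (fun _ : ℕ => ℝ) ∞) :=
    fun v => ‖v‖ • κ (f (sph v)) with hh
  -- bound
  obtain ⟨C, hC⟩ : ∃ C, ∀ y, ‖κ (f y)‖ ≤ C := by
    obtain ⟨C, hC⟩ := (isBounded_iff_forall_norm_le.mp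
      (isCompact_range (hκ.continuous.comp hf)).isBounded)
    exact ⟨C, fun y => hC _ (Set.mem_range_self y)⟩
  -- continuity of h
  have hcont : Continuous h := by
    rw [continuous_iff_continuousAt]
    intro v
    rcases eq_or_ne v 0 with rfl | hv
    · have h0 : h 0 = 0 := by simp [hh]
      rw [ContinuousAt, h0]
      have hb : ∀ w, ‖h w‖ ≤ C * ‖w‖ := by
        intro w
        rw [hh]
        calc ‖‖w‖ • κ (f (sph w))‖ = ‖κ (f (sph w))‖ * ‖w‖ := by
              rw [norm_smul, norm_norm, mul_comm]
          _ ≤ C * ‖w‖ := mul_le_mul_of_nonneg_right (hC _) (norm_nonneg _)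
      have ht : Filter.Tendsto (fun w : EuclideanSpace ℝ (Fin (n + 1)) => C * ‖w‖)
          (𝓝 0) (𝓝 0) := by
        have hc2 : Continuous (fun w : EuclideanSpace ℝ (Fin (n + 1)) => C * ‖w‖) :=
          continuous_const.mul continuous_norm
        have := hc2.tendsto (0 : EuclideanSpace ℝ (Fin (n + 1)))
        simpa using this
      exact squeeze_zero_norm hb ht
    · have hsphc : ContinuousAt sph v := by
        rw [Topology.IsInducing.subtypeVal.continuousAt_iff]
        have hcongr : (fun w => ‖w‖⁻¹ • w) =ᶠ[𝓝 v]
            (fun w => ((sph w : EuclideanSpace ℝ (Fin (n + 1))))) := by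
          filter_upwards [isOpen_compl_singleton.mem_nhds hv] with w hw
          simp only [hsph, dif_neg (show w ≠ 0 from hw)]
        exact (((continuous_norm.continuousAt.inv₀
          (norm_ne_zero_iff.mpr hv)).smul continuousAt_id).congr hcongr)
      exact continuous_norm.continuousAt.smul
        (((hκ.continuous.comp hf).continuousAt).comp hsphc)
  -- the cone
  set F : (Metric.sphere (0 : EuclideanSpace ℝ (Fin (n + 1))) 1) × ℝ → ↥(lp (fun _ : ℕ => ℝ) ∞) :=
    fun p => p.2 • κ (f p.1) with hF
  have hFc : Continuous F := continuous_snd.smul ((hκ.continuous.comp hf).comp continuous_fst)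
  set Lset : Set (↥(lp (fun _ : ℕ => ℝ) ∞)) := F '' (Set.univ ×ˢ Set.Icc (0 : ℝ) 1) with hLset
  have hLcomp : IsCompact Lset := (isCompact_univ.prod isCompact_Icc).image hFc
  haveI : CompactSpace Lset := isCompact_iff_compactSpace.mp hLcomp
  have hmem : ∀ x : (Metric.closedBall (0 : EuclideanSpace ℝ (Fin (n + 1))) 1),
      h x.val ∈ Lset := by
    intro x
    refine ⟨(sph x.val, ‖x.val‖), ⟨Set.mem_univ _, ⟨norm_nonneg _, ?_⟩⟩, rfl⟩
    exact mem_closedBall_zero_iff.mp x.2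
  set Kset : Set Lset := {x | ∃ y, (x : ↥(lp (fun _ : ℕ => ℝ) ∞)) = κ (f y)} with hKset
  have hKcomp : IsCompact Kset := by
    have heq : Kset = Subtype.val ⁻¹' (Set.range fun y => κ (f y)) := by
      ext x
      simp [hKset, eq_comm]
    have : IsClosed Kset := by
      rw [heq]
      exact ((isCompact_range (hκ.continuous.comp hf)).isClosed).preimage continuous_subtype_val
    exact this.isCompact
  set f' : Kset → M := fun x => f x.2.choose with hf'def
  have hf'spec : ∀ x : Kset, (x.val : ↥(lp (fun _ : ℕ => ℝ) ∞)) = κ (f x.2.choose) :=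
    fun x => x.2.choose_spec
  have hf'iso : Isometry f' := by
    apply Isometry.of_dist_eq
    intro a b
    calc dist (f' a) (f' b) = dist (κ (f a.2.choose)) (κ (f b.2.choose)) := (hκ.dist_eq _ _).symm
      _ = dist (a.val : ↥(lp (fun _ : ℕ => ℝ) ∞)) (b.val : ↥(lp (fun _ : ℕ => ℝ) ∞)) := by
          rw [← hf'spec a, ← hf'spec b]
      _ = dist a b := by rw [Subtype.dist_eq, Subtype.dist_eq]
  obtain ⟨g, hgiso, hgK⟩ := hM Lset inferInstance inferInstance Kset hKcomp f' hf'iso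
  refine ⟨fun x => g ⟨h x.val, hmem x⟩, ?_, ?_⟩
  · exact hgiso.continuous.comp (Continuous.subtype_mk (hcont.comp continuous_subtype_val) _)
  · intro x
    have hx1 : ‖(x : EuclideanSpace ℝ (Fin (n + 1)))‖ = 1 := mem_sphere_zero_iff_norm.mp x.2
    have hx0 : (x : EuclideanSpace ℝ (Fin (n + 1))) ≠ 0 := by
      rw [← norm_ne_zero_iff, hx1]; exact one_ne_zero
    have hone : ‖(x : EuclideanSpace ℝ (Fin (n + 1)))‖⁻¹ • (x : EuclideanSpace ℝ (Fin (n + 1)))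
        = (x : EuclideanSpace ℝ (Fin (n + 1))) := by
      rw [hx1, inv_one, one_smul]
    have hsphx : sph (x : EuclideanSpace ℝ (Fin (n + 1))) = x := by
      rw [hsph]
      simp only [dif_neg hx0]
      exact Subtype.ext hone
    have hval : h ((Set.inclusion Metric.sphere_subset_closedBall x :
        Metric.closedBall (0 : EuclideanSpace ℝ (Fin (n + 1))) 1) : EuclideanSpace ℝ (Fin (n + 1)))
        = κ (f x) := by
      show ‖(x : EuclideanSpace ℝ (Fin (n + 1)))‖ • κ (f (sph (x : EuclideanSpace ℝ (Fin (n + 1))))) = κ (f x)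
      rw [hx1, hsphx, one_smul]
    set e : Lset := ⟨h ((Set.inclusion Metric.sphere_subset_closedBall x :
        Metric.closedBall (0 : EuclideanSpace ℝ (Fin (n + 1))) 1) : EuclideanSpace ℝ (Fin (n + 1))),
      hmem _⟩ with he
    have heK : e ∈ Kset := ⟨x, hval⟩
    have h1 : g e = f' ⟨e, heK⟩ := hgK ⟨e, heK⟩
    have h2 : κ (f heK.choose) = κ (f x) := by
      rw [← hf'spec ⟨e, heK⟩]
      exact hval
    have h3 : f' ⟨e, heK⟩ = f x := hκ.injective h2
    exact h1.trans h3
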